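/- For all a > 0, b > 0 and t ∈ (0, b/a), one has e^{2t/a}(1 - at/b)^{2b/a²} ≤ exp(-t²/b). -/

import Mathlib

open Real Set

lemma log_one_sub_le_aux (x : ℝ) (h0 : 0 ≤ x) (h1 : x < 1) :
    Real.log (1 - x) ≤ -x - x ^ 2 / 2 := by
  set f : ℝ → ℝ := fun y => Real.log (1 - y) + y + y ^ 2 / 2 with hf
  have H : AntitoneOn f (Set.Ico (0 : ℝ) 1) := by
    apply antitoneOn_of_deriv_nonpos (convex_Ico 0 1)
    · intro y hy
      have hy1 : (1 : ℝ) - y ≠ 0 := by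
        have := hy.2; simp only [Set.mem_Ico] at hy; intro h; linarith [hy.2, sub_eq_zero.mp h]
      exact (((Real.continuousAt_log hy1).comp (by fun_prop)).add (by fun_prop) |>.add
        (by fun_prop)).continuousWithinAt
    · intro y hy
      rw [interior_Ico] at hy
      have hy1 : (0 : ℝ) < 1 - y := by linarith [hy.2]
      have h1 : HasDerivAt (fun y : ℝ => 1 - y) (-1) y := by
        simpa using (hasDerivAt_id y).const_sub 1
      have h2 : HasDerivAt (fun y => Real.log (1 - y)) (-(1 / (1 - y))) y := by
        have := (Real.hasDerivAt_log hy1.ne').comp y h1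
        simpa [div_eq_mul_inv, mul_comm, Function.comp_def] using this
      have h3 : HasDerivAt (fun y : ℝ => y ^ 2 / 2) y y := by
        simpa using ((hasDerivAt_pow 2 y).div_const 2)
      have hd : HasDerivAt f (-(1 / (1 - y)) + 1 + y) y := by
        exact (h2.add (hasDerivAt_id y)).add h3
      exact hd.differentiableAt.differentiableWithinAt
    · intro y hy
      rw [interior_Ico] at hy
      have hy1 : (0 : ℝ) < 1 - y := by linarith [hy.2]
      have hd : HasDerivAt f (-(1 / (1 - y)) + 1 + y) y := by
        have h1 : HasDerivAt (fun y : ℝ => 1 - y) (-1) y := by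
          simpa using (hasDerivAt_id y).const_sub 1
        have h2 : HasDerivAt (fun y => Real.log (1 - y)) (-(1 / (1 - y))) y := by
          have := (Real.hasDerivAt_log hy1.ne').comp y h1
          simpa [div_eq_mul_inv, mul_comm, Function.comp_def] using this
        have h3 : HasDerivAt (fun y : ℝ => y ^ 2 / 2) y y := by
          simpa using ((hasDerivAt_pow 2 y).div_const 2)
        exact (h2.add (hasDerivAt_id y)).add h3
      rw [hd.deriv]
      have : -(1 / (1 - y)) + 1 + y = -(y ^ 2) / (1 - y) := by
        field_simp; ring
      rw [this]
      apply div_nonpos_of_nonpos_of_nonneg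
      · nlinarith [sq_nonneg y]
      · linarith
  have h0' : (0 : ℝ) ∈ Set.Ico (0 : ℝ) 1 := by constructor <;> norm_num
  have hx' : x ∈ Set.Ico (0 : ℝ) 1 := ⟨h0, h1⟩
  have := H h0' hx' h0
  simp only [hf] at this
  simp at this
  linarith

theorem stmt7 (a b t : ℝ) (ha : 0 < a) (hb : 0 < b)
    (ht : t ∈ Set.Ioo (0 : ℝ) (b / a)) :
    Real.exp (2 * t / a) * (1 - a * t / b) ^ (2 * b / a ^ 2) ≤
      Real.exp (-(t ^ 2) / b) := by
  obtain ⟨ht0, htba⟩ := ht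
  have hx1 : a * t / b < 1 := by
    rw [div_lt_one hb]
    have := (lt_div_iff₀ ha).mp htba
    linarith [mul_comm t a]
  have hx0 : 0 < a * t / b := by positivity
  have hpos : 0 < 1 - a * t / b := by linarith
  rw [Real.rpow_def_of_pos hpos, ← Real.exp_add, Real.exp_le_exp]
  have hlog := log_one_sub_le_aux (a * t / b) hx0.le hx1
  have hc : 0 ≤ 2 * b / a ^ 2 := by positivity
  have := mul_le_mul_of_nonneg_right hlog hc
  have hkey : (-(a * t / b) - (a * t / b) ^ 2 / 2) * (2 * b / a ^ 2) = -(2 * t / a) - t ^ 2 / b := by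
    field_simp
  calc 2 * t / a + Real.log (1 - a * t / b) * (2 * b / a ^ 2)
      ≤ 2 * t / a + (-(a * t / b) - (a * t / b) ^ 2 / 2) * (2 * b / a ^ 2) := by linarith
    _ = -(t ^ 2) / b := by rw [hkey]; ring
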